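/- The pointwise bound w_ℓ(x) ≤ Ca/(N|x|) for the hard-core scattering solution: with f(r) as in the explicit Neumann hard-core problem, the function w(r) = 1 − f(r) satisfies w(r) ≤ C a/(N r) for b = a/N ≤ r ≤ ℓ, with a universal constant C, provided a/(Nℓ) is small enough. -/

import Mathlib

set_option maxHeartbeats 800000 in
theorem stmt14 :
    ∃ ε₀ > 0, ∃ C > 0, ∀ b ℓ lam : ℝ, 0 < b → b < ℓ → b / ℓ ≤ ε₀ →
      IsLeast {t : ℝ | 0 < t ∧ Real.tan (Real.sqrt t * (ℓ - b)) = Real.sqrt t * ℓ} lam →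
      ∀ r ∈ Set.Icc b ℓ,
        1 - (ℓ * Real.sin (Real.sqrt lam * (r - b)))
              / (r * Real.sin (Real.sqrt lam * (ℓ - b)))
          ≤ C * b / r := by
  refine ⟨1/10, by norm_num, 3, by norm_num, ?_⟩
  intro b ℓ lam hb hbl hε hlam
  have hℓ : 0 < ℓ := hb.trans hbl
  have hθ : 0 < ℓ - b := by linarith
  have hb10 : 10 * b ≤ ℓ := by
    rw [div_le_div_iff₀ hℓ (by norm_num)] at hε; linarith
  -- the candidate root interval
  set c : ℝ := Real.sqrt (b / ℓ) with hc_def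
  have hbl_pos : 0 < b / ℓ := div_pos hb hℓ
  have hc_pos : 0 < c := Real.sqrt_pos.mpr hbl_pos
  have hc_sq : c ^ 2 = b / ℓ := Real.sq_sqrt hbl_pos.le
  have hc_le1 : c ≤ 1 := by
    rw [show (1:ℝ) = Real.sqrt 1 by simp [Real.sqrt_one]]
    exact Real.sqrt_le_sqrt (by rw [div_le_one hℓ]; linarith)
  have hcℓ : c ^ 2 * ℓ = b := by rw [hc_sq]; field_simp
  -- h c < 0
  have hhc : (ℓ - b) * Real.sin c - ℓ * (c * Real.cos c) < 0 := by
    have h1 : Real.sin c < c := Real.sin_lt hc_pos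
    have h2 : 1 - c ^ 2 / 2 ≤ Real.cos c := Real.one_sub_sq_div_two_le_cos
    have h3 : ℓ * (c * (1 - c ^ 2 / 2)) ≤ ℓ * (c * Real.cos c) :=
      mul_le_mul_of_nonneg_left (mul_le_mul_of_nonneg_left h2 hc_pos.le) hℓ.le
    have h4 : (ℓ - b) * Real.sin c < (ℓ - b) * c :=
      mul_lt_mul_of_pos_left h1 hθ
    have h5 : ℓ * (c * (1 - c ^ 2 / 2)) = ℓ * c - b * c / 2 := by
      linear_combination (-(c/2)) * hcℓ
    linarith [h3, h4, h5, mul_pos hc_pos hb]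
  -- h 1 > 0
  have hh1 : 0 < (ℓ - b) * Real.sin 1 - ℓ * (1 * Real.cos 1) := by
    have h1 : (1:ℝ) - 1 ^ 3 / 4 < Real.sin 1 := by linarith [Real.sin_gt_sub_cube (x := 1) one_pos]
    have h2 : Real.cos 1 ≤ 2/3 := by linarith [Real.cos_one_le]
    have h3 : (ℓ - b) * (1 - 1 ^ 3 / 4) ≤ (ℓ - b) * Real.sin 1 :=
      mul_le_mul_of_nonneg_left h1.le hθ.le
    have h4 : ℓ * Real.cos 1 ≤ ℓ * (2/3) := mul_le_mul_of_nonneg_left h2 hℓ.le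
    nlinarith
  -- IVT
  have hcont : Continuous fun x : ℝ => (ℓ - b) * Real.sin x - ℓ * (x * Real.cos x) :=
    (continuous_const.mul Real.continuous_sin).sub
      (continuous_const.mul (continuous_id.mul Real.continuous_cos))
  obtain ⟨y, hy_mem, hy⟩ :=
    intermediate_value_Icc hc_le1 hcont.continuousOn
      (Set.mem_Icc.mpr ⟨hhc.le, hh1.le⟩)
  obtain ⟨hyc, hy1⟩ := hy_mem
  have hy_pos : 0 < y := lt_of_lt_of_le hc_pos hyc
  have hy_eq : (ℓ - b) * Real.sin y = ℓ * (y * Real.cos y) := by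
    have hy' : (ℓ - b) * Real.sin y - ℓ * (y * Real.cos y) = 0 := hy
    linarith
  have hpi : (1:ℝ) < Real.pi / 2 := by linarith [Real.pi_gt_three]
  have hcosy : 0 < Real.cos y :=
    Real.cos_pos_of_mem_Ioo ⟨by linarith, by linarith⟩
  -- the member of the set
  set t : ℝ := (y / (ℓ - b)) ^ 2 with ht_def
  have hyθ : 0 ≤ y / (ℓ - b) := div_nonneg hy_pos.le hθ.le
  have hts : Real.sqrt t = y / (ℓ - b) := Real.sqrt_sq hyθ
  have ht_mem : t ∈ {t : ℝ | 0 < t ∧ Real.tan (Real.sqrt t * (ℓ - b)) = Real.sqrt t * ℓ} := by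
    constructor
    · exact pow_pos (div_pos hy_pos hθ) 2
    · rw [hts]
      have h6 : y / (ℓ - b) * (ℓ - b) = y := by field_simp
      rw [h6, Real.tan_eq_sin_div_cos, div_eq_iff hcosy.ne']
      rw [div_mul_eq_mul_div, div_mul_eq_mul_div, eq_comm, div_eq_iff hθ.ne']
      linear_combination -hy_eq
  have hlam_le : lam ≤ t := hlam.2 ht_mem
  have hlam_pos : 0 < lam := hlam.1.1
  have hslam : 0 < Real.sqrt lam := Real.sqrt_pos.mpr hlam_pos
  -- x := sqrt lam * θ
  set x : ℝ := Real.sqrt lam * (ℓ - b) with hx_def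
  have hx_pos : 0 < x := mul_pos hslam hθ
  have hx_le_y : x ≤ y := by
    have h1 : Real.sqrt lam ≤ Real.sqrt t := Real.sqrt_le_sqrt hlam_le
    rw [hts] at h1
    calc x = Real.sqrt lam * (ℓ - b) := rfl
    _ ≤ y / (ℓ - b) * (ℓ - b) := mul_le_mul_of_nonneg_right h1 hθ.le
    _ = y := by field_simp
  have hx_le1 : x ≤ 1 := hx_le_y.trans hy1
  have hcosx : 0 < Real.cos x :=
    Real.cos_pos_of_mem_Ioo ⟨by linarith, by linarith⟩
  -- the defining equation for x
  have htan : Real.tan x = Real.sqrt lam * ℓ := hlam.1.2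
  have hx_eq : (ℓ - b) * Real.sin x = ℓ * (x * Real.cos x) := by
    rw [Real.tan_eq_sin_div_cos, div_eq_iff hcosx.ne'] at htan
    rw [htan, hx_def]; ring
  have hsinx_pos : 0 < Real.sin x :=
    Real.sin_pos_of_pos_of_lt_pi hx_pos (by linarith [Real.pi_gt_three])
  have hx2le1 : x ^ 2 ≤ 1 := by
    linarith [mul_le_mul hx_le1 hx_le1 hx_pos.le zero_le_one]
  -- the bound x^2 * ℓ ≤ 6 b
  have hsinx_lb : x - x ^ 3 / 4 < Real.sin x := by linarith [Real.sin_gt_sub_cube hx_pos, pow_pos hx_pos 3]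
  have hsinx_lt : Real.sin x < x := Real.sin_lt hx_pos
  have hx_sq : x ^ 2 * ℓ ≤ 6 * b := by
    have e1 : b * Real.sin x = ℓ * Real.sin x - ℓ * (x * Real.cos x) := by
      linear_combination -hx_eq
    have h2 : |Real.cos x - (1 - x ^ 2 / 2)| ≤ |x| ^ 4 * (5/96) :=
      Real.cos_bound (by rw [abs_of_pos hx_pos]; exact hx_le1)
    rw [abs_of_pos hx_pos, abs_le] at h2
    have hB : Real.cos x ≤ 1 - x ^ 2 / 2 + 5/96 * x ^ 4 := by linarith [h2.2]
    have hBx : x * Real.cos x ≤ x * (1 - x ^ 2 / 2 + 5/96 * x ^ 4) :=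
      mul_le_mul_of_nonneg_left hB hx_pos.le
    have e2 : x ^ 3 / 4 - 5/96 * x ^ 5 ≤ Real.sin x - x * Real.cos x := by
      linarith [hsinx_lb, hBx]
    have e2l : ℓ * (x ^ 3 / 4 - 5/96 * x ^ 5) ≤ ℓ * (Real.sin x - x * Real.cos x) :=
      mul_le_mul_of_nonneg_left e2 hℓ.le
    have e3 : x ^ 5 ≤ x ^ 3 := by
      linarith [mul_nonneg (pow_nonneg hx_pos.le 3) (by linarith : (0:ℝ) ≤ 1 - x ^ 2)]
    have e3l : ℓ * x ^ 5 ≤ ℓ * x ^ 3 := mul_le_mul_of_nonneg_left e3 hℓ.le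
    have eC : b * Real.sin x ≤ b * x := (mul_lt_mul_of_pos_left hsinx_lt hb).le
    have E : 19/96 * (ℓ * x ^ 3) ≤ b * x := by linarith [e1, e2l, e3l, eC]
    have E' : x * (19/96 * (ℓ * x ^ 2)) ≤ x * b := by linarith [E]
    have := le_of_mul_le_mul_left E' hx_pos
    linarith
  -- final bound
  intro r hr
  obtain ⟨hrb, hrl⟩ := hr
  have hr_pos : 0 < r := lt_of_lt_of_le hb hrb
  rcases eq_or_lt_of_le hrb with hrb' | hrb'
  · subst hrb'
    simp only [sub_self, mul_zero, Real.sin_zero, zero_div, sub_zero]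
    rw [mul_div_assoc, div_self hr_pos.ne']
    norm_num
  · set u : ℝ := Real.sqrt lam * (r - b) with hu_def
    have hu_pos : 0 < u := mul_pos hslam (by linarith)
    have hu_le_x : u ≤ x := by
      rw [hu_def, hx_def]
      exact mul_le_mul_of_nonneg_left (by linarith) hslam.le
    have hu_le1 : u ≤ 1 := hu_le_x.trans hx_le1
    have hsinu : u - u ^ 3 / 4 < Real.sin u := by linarith [Real.sin_gt_sub_cube hu_pos, pow_pos hu_pos 3]
    have huθ : u * (ℓ - b) = x * (r - b) := by rw [hu_def, hx_def]; ring
    -- key inequality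
    have key : r * Real.sin x ≤ 3 * b * Real.sin x + ℓ * Real.sin u := by
      have k1 : ℓ * (u - u ^ 3 / 4) ≤ ℓ * Real.sin u :=
        mul_le_mul_of_nonneg_left hsinu.le hℓ.le
      have ku2 : u ^ 2 ≤ x ^ 2 := by
        linarith [mul_le_mul hu_le_x hu_le_x hu_pos.le (hu_pos.le.trans hu_le_x)]
      have k2 : u ^ 3 ≤ u * x ^ 2 := by
        linarith [mul_le_mul_of_nonneg_left ku2 hu_pos.le]
      have k2l : ℓ * u ^ 3 ≤ ℓ * (u * x ^ 2) := mul_le_mul_of_nonneg_left k2 hℓ.le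
      have k2' : u * (x ^ 2 * ℓ) ≤ u * (6 * b) := mul_le_mul_of_nonneg_left hx_sq hu_pos.le
      have k3 : ℓ * u = x * (r - b) + b * u := by linear_combination huθ
      have k4 : 3 * b * (x - x ^ 3 / 4) ≤ 3 * b * Real.sin x :=
        mul_le_mul_of_nonneg_left hsinx_lb.le (by linarith)
      have k5 : x ^ 3 ≤ x := by
        linarith [mul_nonneg hx_pos.le (by linarith : (0:ℝ) ≤ 1 - x ^ 2)]
      have k5b : b * x ^ 3 ≤ b * x := mul_le_mul_of_nonneg_left k5 hb.le
      have k7 : b * u ≤ b * x := mul_le_mul_of_nonneg_left hu_le_x hb.le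
      have k6 : r * Real.sin x ≤ r * x := (mul_lt_mul_of_pos_left hsinx_lt hr_pos).le
      linarith [k1, k2l, k2', k3, k4, k5b, k7, k6, mul_pos hb hx_pos, mul_pos hb hu_pos]
    have hden : 0 < r * Real.sin x := mul_pos hr_pos hsinx_pos
    have h2 : (r - 3*b)/r ≤ ℓ * Real.sin u / (r * Real.sin x) := by
      rw [div_le_div_iff₀ hr_pos hden]
      linarith [mul_le_mul_of_nonneg_right key hr_pos.le]
    have h3 : (r - 3*b)/r = 1 - 3*b/r := by field_simp
    calc 1 - ℓ * Real.sin u / (r * Real.sin x)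
        ≤ 1 - (r - 3*b)/r := by linarith
      _ = 3 * b / r := by rw [h3]; ring
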